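/- For a, b ∈ {1, 2, 3} with a ≠ b and ε ∈ {1, −1}, θ_b(H_a(ε)) = H_a(−ε). -/
import Mathlib


open RealInnerProductSpace

/-- An almost contact metric structure `(φ, ξ, η)` together with an almost contact metric
3-structure `(φ_a, ξ_a, η_a)`, `a ∈ {1,2,3}` (indices mod 3), on a real inner product space `V`,
modelling the structures induced on the tangent space of a real hypersurface in the complex
two-plane Grassmannian `G₂(ℂ^{m+2})` by the Kaehler structure `J` and the quaternionic Kaehler
structure `𝔍`.  Here `η(X) = ⟪ξ, X⟫` and `η_a(X) = ⟪ξ_a, X⟫` are written out via the inner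
product. -/
structure ACMS3 (V : Type*) [NormedAddCommGroup V] [InnerProductSpace ℝ V] where
  phi : V →ₗ[ℝ] V
  xi : V
  phiA : Fin 3 → V →ₗ[ℝ] V
  xiA : Fin 3 → V
  xi_unit : ‖xi‖ = 1
  phi_sq : ∀ X : V, phi (phi X) = -X + ⟪xi, X⟫ • xi
  phi_xi : phi xi = 0
  phi_metric : ∀ X Y : V, ⟪phi X, phi Y⟫ = ⟪X, Y⟫ - ⟪xi, X⟫ * ⟪xi, Y⟫
  xiA_unit : ∀ a, ‖xiA a‖ = 1
  phiA_sq : ∀ a (X : V), phiA a (phiA a X) = -X + ⟪xiA a, X⟫ • xiA a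
  phiA_xiA : ∀ a, phiA a (xiA a) = 0
  phiA_metric : ∀ a (X Y : V),
    ⟪phiA a X, phiA a Y⟫ = ⟪X, Y⟫ - ⟪xiA a, X⟫ * ⟪xiA a, Y⟫
  quat1 : ∀ a (X : V), phiA a (phiA (a + 1) X) - ⟪xiA (a + 1), X⟫ • xiA a = phiA (a + 2) X
  quat2 : ∀ a (X : V),
    phiA (a + 2) X = -(phiA (a + 1) (phiA a X)) + ⟪xiA a, X⟫ • xiA (a + 1)
  quat_xi1 : ∀ a, phiA a (xiA (a + 1)) = xiA (a + 2)
  quat_xi2 : ∀ a, xiA (a + 2) = -(phiA (a + 1) (xiA a))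
  rel : ∀ a (X : V), phiA a (phi X) - ⟪xi, X⟫ • xiA a = phi (phiA a X) - ⟪xiA a, X⟫ • xi
  rel_xi : ∀ a, phi (xiA a) = phiA a xi

variable {V : Type*} [NormedAddCommGroup V] [InnerProductSpace ℝ V]

/-- The endomorphism `θ_a X := φ_a φ X − η(X) ξ_a`. -/
noncomputable def ACMS3.theta (S : ACMS3 V) (a : Fin 3) : V →ₗ[ℝ] V where
  toFun X := S.phiA a (S.phi X) - ⟪S.xi, X⟫ • S.xiA a
  map_add' X Y := by
    simp only [map_add, inner_add_right, add_smul]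
    abel
  map_smul' r X := by
    simp only [map_smul, inner_smul_right, RingHom.id_apply, smul_sub, smul_smul]

/-- `H^⊥ = span{ξ, ξ₁, ξ₂, ξ₃, φξ₁, φξ₂, φξ₃}`. -/
noncomputable def ACMS3.Hperp (S : ACMS3 V) : Submodule ℝ V :=
  Submodule.span ℝ {S.xi, S.xiA 0, S.xiA 1, S.xiA 2,
    S.phi (S.xiA 0), S.phi (S.xiA 1), S.phi (S.xiA 2)}

/-- `H` is the orthogonal complement of `H^⊥` in `V`. -/
noncomputable def ACMS3.H (S : ACMS3 V) : Submodule ℝ V := S.Hperpᗮ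

/-- `H_a(ε)`, the eigenspace of `θ_a` restricted to `H` corresponding to the eigenvalue `ε`. -/
noncomputable def ACMS3.eigenH (S : ACMS3 V) (a : Fin 3) (ε : ℝ) : Submodule ℝ V :=
  S.H ⊓ Module.End.eigenspace (S.theta a) ε

/-- The normal Jacobi operator
`R̂_N X = X + 3η(X)ξ + Σ_a (3η_a(X)ξ_a − η(ξ_a)θ_a X + η_a(φX)φξ_a)`. -/
noncomputable def ACMS3.jacobi (S : ACMS3 V) (X : V) : V :=
  X + (3 * ⟪S.xi, X⟫) • S.xi +
    ∑ a : Fin 3, ((3 * ⟪S.xiA a, X⟫) • S.xiA a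
      - ⟪S.xi, S.xiA a⟫ • S.theta a X
      + ⟪S.xiA a, S.phi X⟫ • S.phi (S.xiA a))

namespace ACMS3

variable (S : ACMS3 V)

lemma theta_apply (a : Fin 3) (X : V) :
    S.theta a X = S.phiA a (S.phi X) - ⟪S.xi, X⟫ • S.xiA a := rfl

lemma xi_ne : S.xi ≠ 0 := by
  intro h
  have := S.xi_unit
  rw [h, norm_zero] at this
  norm_num at this

lemma xiA_ne (a : Fin 3) : S.xiA a ≠ 0 := by
  intro h
  have := S.xiA_unit a
  rw [h, norm_zero] at this
  norm_num at this

lemma eta_phi (X : V) : ⟪S.xi, S.phi X⟫ = 0 := by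
  have h1 : S.phi (S.phi (S.phi X)) = -(S.phi X) + ⟪S.xi, S.phi X⟫ • S.xi := S.phi_sq _
  have h2 : S.phi (S.phi (S.phi X)) = -(S.phi X) := by
    rw [S.phi_sq X, map_add, map_neg, map_smul, S.phi_xi, smul_zero, add_zero]
  rw [h2] at h1
  have h3 : ⟪S.xi, S.phi X⟫ • S.xi = 0 := by
    have := h1.symm
    rwa [add_eq_left] at this
  rcases smul_eq_zero.mp h3 with h | h
  · exact h
  · exact absurd h S.xi_ne

lemma etaA_phiA (a : Fin 3) (X : V) : ⟪S.xiA a, S.phiA a X⟫ = 0 := by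
  have h1 : S.phiA a (S.phiA a (S.phiA a X))
      = -(S.phiA a X) + ⟪S.xiA a, S.phiA a X⟫ • S.xiA a := S.phiA_sq a _
  have h2 : S.phiA a (S.phiA a (S.phiA a X)) = -(S.phiA a X) := by
    rw [S.phiA_sq a X, map_add, map_neg, map_smul, S.phiA_xiA a, smul_zero, add_zero]
  rw [h2] at h1
  have h3 : ⟪S.xiA a, S.phiA a X⟫ • S.xiA a = 0 := by
    have := h1.symm
    rwa [add_eq_left] at this
  rcases smul_eq_zero.mp h3 with h | h
  · exact h
  · exact absurd h (S.xiA_ne a)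

lemma phi_skew (X Y : V) : ⟪S.phi X, Y⟫ = -⟪X, S.phi Y⟫ := by
  have hY : Y = -(S.phi (S.phi Y)) + ⟪S.xi, Y⟫ • S.xi := by
    rw [S.phi_sq Y]; abel
  calc ⟪S.phi X, Y⟫ = ⟪S.phi X, -(S.phi (S.phi Y)) + ⟪S.xi, Y⟫ • S.xi⟫ := by rw [← hY]
    _ = -⟪S.phi X, S.phi (S.phi Y)⟫ + ⟪S.xi, Y⟫ * ⟪S.phi X, S.xi⟫ := by
        rw [inner_add_right, inner_neg_right, real_inner_smul_right]
    _ = -⟪X, S.phi Y⟫ := by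
        have h0 : ⟪S.phi X, S.xi⟫ = 0 := by rw [real_inner_comm]; exact S.eta_phi X
        rw [S.phi_metric, S.eta_phi, h0]
        ring

lemma phi_skew' (X Y : V) : ⟪X, S.phi Y⟫ = -⟪S.phi X, Y⟫ := by
  rw [S.phi_skew X Y]; ring

lemma phiA_skew (a : Fin 3) (X Y : V) : ⟪S.phiA a X, Y⟫ = -⟪X, S.phiA a Y⟫ := by
  have hY : Y = -(S.phiA a (S.phiA a Y)) + ⟪S.xiA a, Y⟫ • S.xiA a := by
    rw [S.phiA_sq a Y]; abel
  calc ⟪S.phiA a X, Y⟫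
      = ⟪S.phiA a X, -(S.phiA a (S.phiA a Y)) + ⟪S.xiA a, Y⟫ • S.xiA a⟫ := by rw [← hY]
    _ = -⟪S.phiA a X, S.phiA a (S.phiA a Y)⟫ + ⟪S.xiA a, Y⟫ * ⟪S.phiA a X, S.xiA a⟫ := by
        rw [inner_add_right, inner_neg_right, real_inner_smul_right]
    _ = -⟪X, S.phiA a Y⟫ := by
        have h0 : ⟪S.phiA a X, S.xiA a⟫ = 0 := by rw [real_inner_comm]; exact S.etaA_phiA a X
        rw [S.phiA_metric, S.etaA_phiA, h0]
        ring

lemma phiA_skew' (a : Fin 3) (X Y : V) : ⟪X, S.phiA a Y⟫ = -⟪S.phiA a X, Y⟫ := by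
  rw [S.phiA_skew a X Y]; ring

lemma xi_mem : S.xi ∈ S.Hperp := Submodule.subset_span (by simp [Set.mem_insert_iff])

lemma xiA_mem (d : Fin 3) : S.xiA d ∈ S.Hperp := by
  fin_cases d <;> exact Submodule.subset_span (by simp [Set.mem_insert_iff])

lemma phi_xiA_mem (d : Fin 3) : S.phi (S.xiA d) ∈ S.Hperp := by
  fin_cases d <;> exact Submodule.subset_span (by simp [Set.mem_insert_iff])

private lemma fin3_cases (a b : Fin 3) : b = a ∨ b = a + 1 ∨ b = a + 2 := by
  revert a b; decide

private lemma fin3_a21 (a : Fin 3) : a + 2 + 1 = a := by revert a; decide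

private lemma fin3_a22 (a : Fin 3) : a + 2 + 2 = a + 1 := by revert a; decide

lemma phiA_xiA_cases (b c : Fin 3) :
    S.phiA b (S.xiA c) = 0 ∨ (∃ d, S.phiA b (S.xiA c) = S.xiA d) ∨
      (∃ d, S.phiA b (S.xiA c) = -S.xiA d) := by
  rcases fin3_cases b c with h | h | h
  · subst h; exact Or.inl (S.phiA_xiA c)
  · subst h; exact Or.inr (Or.inl ⟨b + 2, S.quat_xi1 b⟩)
  · subst h
    refine Or.inr (Or.inr ⟨b + 1, ?_⟩)
    have h2 := S.quat_xi2 (b + 2)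
    rw [fin3_a22, fin3_a21] at h2
    rw [h2, neg_neg]

lemma phiA_xiA_mem (b c : Fin 3) : S.phiA b (S.xiA c) ∈ S.Hperp := by
  rcases S.phiA_xiA_cases b c with h | ⟨d, h⟩ | ⟨d, h⟩
  · rw [h]; exact zero_mem _
  · rw [h]; exact S.xiA_mem d
  · rw [h]; exact neg_mem (S.xiA_mem d)

lemma phi_phiA_xiA_mem (b c : Fin 3) : S.phi (S.phiA b (S.xiA c)) ∈ S.Hperp := by
  rcases S.phiA_xiA_cases b c with h | ⟨d, h⟩ | ⟨d, h⟩
  · rw [h, map_zero]; exact zero_mem _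
  · rw [h]; exact S.phi_xiA_mem d
  · rw [h, map_neg]; exact neg_mem (S.phi_xiA_mem d)

lemma phiA_phi_xiA_mem (b c : Fin 3) : S.phiA b (S.phi (S.xiA c)) ∈ S.Hperp := by
  have h := S.rel b (S.xiA c)
  have h2 : S.phiA b (S.phi (S.xiA c))
      = (S.phi (S.phiA b (S.xiA c)) - ⟪S.xiA b, S.xiA c⟫ • S.xi)
        + ⟪S.xi, S.xiA c⟫ • S.xiA b := by
    rw [← h]; abel
  rw [h2]
  exact add_mem (sub_mem (S.phi_phiA_xiA_mem b c) (Submodule.smul_mem _ _ S.xi_mem))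
    (Submodule.smul_mem _ _ (S.xiA_mem b))

lemma inner_H {X : V} (hX : X ∈ S.H) {w : V} (hw : w ∈ S.Hperp) : ⟪w, X⟫ = 0 :=
  (Submodule.mem_orthogonal _ _).mp hX w hw

lemma mem_H_of {X : V} (h1 : ⟪S.xi, X⟫ = 0) (h2 : ∀ c, ⟪S.xiA c, X⟫ = 0)
    (h3 : ∀ c, ⟪S.phi (S.xiA c), X⟫ = 0) : X ∈ S.H := by
  rw [ACMS3.H, Submodule.mem_orthogonal]
  intro w hw
  induction hw using Submodule.span_induction with
  | mem w hw =>
      simp only [Set.mem_insert_iff, Set.mem_singleton_iff] at hw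
      rcases hw with rfl | rfl | rfl | rfl | rfl | rfl | rfl
      · exact h1
      · exact h2 0
      · exact h2 1
      · exact h2 2
      · exact h3 0
      · exact h3 1
      · exact h3 2
  | zero => exact inner_zero_left X
  | add x y _ _ hx hy => rw [inner_add_left, hx, hy, add_zero]
  | smul r x _ hx => rw [real_inner_smul_left, hx, mul_zero]

lemma phi_mem_H {X : V} (hX : X ∈ S.H) : S.phi X ∈ S.H := by
  refine S.mem_H_of (S.eta_phi X) (fun c => ?_) (fun c => ?_)
  · rw [S.phi_skew' (S.xiA c) X, S.inner_H hX (S.phi_xiA_mem c), neg_zero]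
  · rw [S.phi_metric, S.inner_H hX (S.xiA_mem c), S.inner_H hX S.xi_mem, mul_zero, sub_zero]

lemma phiA_mem_H (b : Fin 3) {X : V} (hX : X ∈ S.H) : S.phiA b X ∈ S.H := by
  refine S.mem_H_of ?_ (fun c => ?_) (fun c => ?_)
  · rw [S.phiA_skew' b S.xi X, ← S.rel_xi b, S.inner_H hX (S.phi_xiA_mem b), neg_zero]
  · rw [S.phiA_skew' b (S.xiA c) X, S.inner_H hX (S.phiA_xiA_mem b c), neg_zero]
  · rw [S.phiA_skew' b (S.phi (S.xiA c)) X, S.inner_H hX (S.phiA_phi_xiA_mem b c), neg_zero]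

lemma theta_eq (b : Fin 3) {X : V} (hX : X ∈ S.H) :
    S.theta b X = S.phi (S.phiA b X) := by
  rw [S.theta_apply b X, S.rel b X, S.inner_H hX (S.xiA_mem b), zero_smul, sub_zero]

lemma theta_mem_H (b : Fin 3) {X : V} (hX : X ∈ S.H) : S.theta b X ∈ S.H := by
  rw [S.theta_eq b hX]
  exact S.phi_mem_H (S.phiA_mem_H b hX)

lemma theta_theta (c d : Fin 3) {X : V} (hX : X ∈ S.H) :
    S.theta c (S.theta d X) = -(S.phiA c (S.phiA d X)) := by
  have hdH : S.theta d X ∈ S.H := S.theta_mem_H d hX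
  have hbH : S.phiA d X ∈ S.H := S.phiA_mem_H d hX
  rw [S.theta_apply c (S.theta d X), S.inner_H hdH S.xi_mem, zero_smul, sub_zero,
    S.theta_eq d hX, S.phi_sq (S.phiA d X), S.inner_H hbH S.xi_mem, zero_smul, add_zero,
    map_neg]

lemma phiA_cyc (c : Fin 3) {X : V} (hX : X ∈ S.H) :
    S.phiA c (S.phiA (c + 1) X) = -(S.phiA (c + 1) (S.phiA c X)) := by
  have h1 := S.quat1 c X
  rw [S.inner_H hX (S.xiA_mem (c + 1)), zero_smul, sub_zero] at h1
  have h2 := S.quat2 c X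
  rw [S.inner_H hX (S.xiA_mem c), zero_smul, add_zero] at h2
  rw [h1, h2]

lemma phiA_anticomm {a b : Fin 3} (hab : a ≠ b) {X : V} (hX : X ∈ S.H) :
    S.phiA a (S.phiA b X) = -(S.phiA b (S.phiA a X)) := by
  rcases fin3_cases a b with h | h | h
  · exact absurd h.symm hab
  · subst h; exact S.phiA_cyc a hX
  · subst h
    have := S.phiA_cyc (a + 2) hX
    rw [fin3_a21] at this
    rw [this, neg_neg]

lemma theta_anticomm {a b : Fin 3} (hab : a ≠ b) {X : V} (hX : X ∈ S.H) :
    S.theta a (S.theta b X) = -(S.theta b (S.theta a X)) := by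
  rw [S.theta_theta a b hX, S.theta_theta b a hX, S.phiA_anticomm hab hX, neg_neg]

lemma theta_sq (b : Fin 3) {X : V} (hX : X ∈ S.H) :
    S.theta b (S.theta b X) = X := by
  rw [S.theta_theta b b hX, S.phiA_sq b X, S.inner_H hX (S.xiA_mem b), zero_smul, add_zero,
    neg_neg]

end ACMS3

/-- For `a, b ∈ {1,2,3}` with `a ≠ b` and `ε ∈ {1,−1}`,
`θ_b(H_a(ε)) = H_a(−ε)`. -/
theorem eigenH_theta_map [FiniteDimensional ℝ V] (S : ACMS3 V) (a b : Fin 3) (hab : a ≠ b)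
    (ε : ℝ) (hε : ε = 1 ∨ ε = -1) :
    (S.eigenH a ε).map (S.theta b) = S.eigenH a (-ε) := by
  simp only [ACMS3.eigenH]
  apply le_antisymm
  · rintro x hx
    rw [Submodule.mem_map] at hx
    obtain ⟨y, hy, rfl⟩ := hx
    obtain ⟨hyH, hyE⟩ := Submodule.mem_inf.mp hy
    have hyE' : S.theta a y = ε • y := Module.End.mem_eigenspace_iff.mp hyE
    refine Submodule.mem_inf.mpr ⟨S.theta_mem_H b hyH, Module.End.mem_eigenspace_iff.mpr ?_⟩
    rw [S.theta_anticomm hab hyH, hyE', map_smul, neg_smul]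
  · intro x hx
    obtain ⟨hxH, hxE⟩ := Submodule.mem_inf.mp hx
    have hxE' : S.theta a x = (-ε) • x := Module.End.mem_eigenspace_iff.mp hxE
    rw [Submodule.mem_map]
    refine ⟨S.theta b x, Submodule.mem_inf.mpr ⟨S.theta_mem_H b hxH,
      Module.End.mem_eigenspace_iff.mpr ?_⟩, S.theta_sq b hxH⟩
    rw [S.theta_anticomm hab hxH, hxE', map_smul, ← neg_smul, neg_neg]
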